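/- There exists a constant c > 0 such that for every n ≥ 1 and every y ∈ ℝⁿ, Σᵢ H(yᵢ) ≥ c · n^(−1/3) · min(Σᵢ |yᵢ|, Σᵢ yᵢ²), where H is the Huber loss of width 1. -/
import Mathlib


/-- The Huber loss of width 1. -/
noncomputable def huber (x : ℝ) : ℝ := if |x| ≤ 1 then x ^ 2 / 2 else |x| - 1 / 2

theorem stmt_4 :
    ∃ c : ℝ, 0 < c ∧ ∀ n : ℕ, 1 ≤ n → ∀ y : Fin n → ℝ,
      c * (n : ℝ) ^ (-(1 / 3) : ℝ) * min (∑ i, |y i|) (∑ i, (y i) ^ 2) ≤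
        ∑ i, huber (y i) := by
  refine ⟨1/4, by norm_num, ?_⟩
  intro n hn y
  have hn1 : (1:ℝ) ≤ (n:ℝ) := by exact_mod_cast hn
  set t : ℝ := (n:ℝ) ^ ((1:ℝ)/3) with ht
  have ht1 : 1 ≤ t := Real.one_le_rpow hn1 (by norm_num)
  have ht0 : 0 < t := lt_of_lt_of_le one_pos ht1
  have hneg : (n : ℝ) ^ (-(1 / 3) : ℝ) = t⁻¹ := by
    rw [ht, ← Real.rpow_neg (by positivity)]
  have htn : t ^ 3 = (n:ℝ) := by
    rw [ht, ← Real.rpow_natCast ((n:ℝ) ^ ((1:ℝ)/3)) 3, ← Real.rpow_mul (by positivity)]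
    norm_num
  set S := Finset.univ.filter (fun i : Fin n => |y i| ≤ 1) with hS
  set L := Finset.univ.filter (fun i : Fin n => ¬ |y i| ≤ 1) with hL
  set A := ∑ i ∈ S, (y i)^2 with hA
  set A1 := ∑ i ∈ S, |y i| with hA1
  set B := ∑ i ∈ L, |y i| with hB
  set B2 := ∑ i ∈ L, (y i)^2 with hB2
  have hAnn : 0 ≤ A := Finset.sum_nonneg fun i _ => sq_nonneg _
  have hA1nn : 0 ≤ A1 := Finset.sum_nonneg fun i _ => abs_nonneg _
  have hBnn : 0 ≤ B := Finset.sum_nonneg fun i _ => abs_nonneg _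
  -- sum splits
  have hl1 : ∑ i, |y i| = A1 + B := by
    rw [hA1, hB, hS, hL, Finset.sum_filter_add_sum_filter_not]
  have hl2 : ∑ i, (y i)^2 = A + B2 := by
    rw [hA, hB2, hS, hL, Finset.sum_filter_add_sum_filter_not]
  -- huber lower bound
  have hH : (A + B)/2 ≤ ∑ i, huber (y i) := by
    have hsplit : ∑ i, huber (y i)
        = ∑ i ∈ S, huber (y i) + ∑ i ∈ L, huber (y i) := by
      rw [hS, hL, Finset.sum_filter_add_sum_filter_not]
    have h1 : ∑ i ∈ S, huber (y i) = A/2 := by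
      rw [hA, Finset.sum_div]
      refine Finset.sum_congr rfl fun i hi => ?_
      rw [hS, Finset.mem_filter] at hi
      simp [huber, hi.2]
    have h2 : B/2 ≤ ∑ i ∈ L, huber (y i) := by
      rw [hB, Finset.sum_div]
      refine Finset.sum_le_sum fun i hi => ?_
      rw [hL, Finset.mem_filter] at hi
      have h1i : 1 < |y i| := not_le.mp hi.2
      rw [huber, if_neg hi.2]
      linarith
    rw [hsplit, h1]
    linarith
  -- Cauchy–Schwarz : A1^2 ≤ n * A
  have hCS : A1^2 ≤ (n:ℝ) * A := by
    have h1 := sq_sum_le_card_mul_sum_sq (s := S) (f := fun i => |y i|)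
    have h2 : ∑ i ∈ S, |y i| ^ 2 = A := by
      rw [hA]; exact Finset.sum_congr rfl fun i _ => sq_abs _
    have h3 : (S.card : ℝ) ≤ (n:ℝ) := by
      exact_mod_cast (Finset.card_filter_le _ _).trans_eq (Finset.card_univ.trans (Fintype.card_fin n))
    rw [h2] at h1
    calc A1^2 ≤ (S.card : ℝ) * A := h1
      _ ≤ (n:ℝ) * A := mul_le_mul_of_nonneg_right h3 hAnn
  -- B2 ≤ B^2
  have hB2B : B2 ≤ B^2 := by
    have h : ∀ i ∈ L, (y i)^2 ≤ |y i| * B := by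
      intro i hi
      have hiB : |y i| ≤ B :=
        Finset.single_le_sum (f := fun j => |y j|) (fun j _ => abs_nonneg _) hi
      calc (y i)^2 = |y i| * |y i| := by rw [sq, ← abs_mul_abs_self]
        _ ≤ |y i| * B := by
            exact mul_le_mul_of_nonneg_left hiB (abs_nonneg _)
    calc B2 ≤ ∑ i ∈ L, |y i| * B := Finset.sum_le_sum h
      _ = B^2 := by rw [← Finset.sum_mul]; ring
  -- key inequality
  have key : min (A1 + B) (A + B2) ≤ 2 * t * (A + B) := by
    rcases le_or_gt t A with hcase | hcase
    · -- A1 ≤ t * A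
      have hsq : A1^2 ≤ (t*A)^2 := by
        nlinarith [mul_nonneg (mul_nonneg ht0.le ht0.le)
          (mul_nonneg hAnn (sub_nonneg.mpr hcase))]
      have hA1le : A1 ≤ t*A := by
        have h := Real.sqrt_le_sqrt hsq
        rwa [Real.sqrt_sq hA1nn, Real.sqrt_sq (by positivity)] at h
      have p1 : B ≤ t * B := le_mul_of_one_le_left hBnn ht1
      have p2 : A1 ≤ t * A := hA1le
      calc min (A1 + B) (A + B2) ≤ A1 + B := min_le_left _ _
        _ ≤ 2 * t * (A + B) := by
            have p3 : 0 ≤ t * A := by positivity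
            have p4 : 0 ≤ t * B := by positivity
            linarith
    · rcases le_or_gt B t with hcase2 | hcase2
      · have p1 : B^2 ≤ t * B := by
          rw [sq]; exact mul_le_mul_of_nonneg_right hcase2 hBnn
        have p2 : A ≤ t * A := le_mul_of_one_le_left hAnn ht1
        have p3 : 0 ≤ t * B := by positivity
        calc min (A1 + B) (A + B2) ≤ A + B2 := min_le_right _ _
          _ ≤ 2 * t * (A + B) := by linarith
      · -- A1 ≤ t * B
        have hsq : A1^2 ≤ (t*B)^2 := by
          have e1 : A1^2 ≤ (n:ℝ) * t :=
            le_trans hCS (mul_le_mul_of_nonneg_left hcase.le (by positivity))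
          rw [← htn] at e1
          have e2 : t^3 * t ≤ (t*B)^2 := by
            have e3 : t*t ≤ B*B :=
              mul_le_mul hcase2.le hcase2.le ht0.le (le_trans ht0.le hcase2.le)
            calc t^3*t = (t*t)*(t*t) := by ring
              _ ≤ (t*t)*(B*B) := mul_le_mul_of_nonneg_left e3 (by positivity)
              _ = (t*B)^2 := by ring
          exact e1.trans e2
        have hA1le : A1 ≤ t*B := by
          have h := Real.sqrt_le_sqrt hsq
          rwa [Real.sqrt_sq hA1nn, Real.sqrt_sq (by positivity)] at h
        have p1 : B ≤ t * B := le_mul_of_one_le_left hBnn ht1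
        have p2 : 0 ≤ t * A := by positivity
        calc min (A1 + B) (A + B2) ≤ A1 + B := min_le_left _ _
          _ ≤ 2 * t * (A + B) := by linarith
  calc 1/4 * (n : ℝ) ^ (-(1 / 3) : ℝ) * min (∑ i, |y i|) (∑ i, (y i) ^ 2)
      = 1/(4*t) * min (A1 + B) (A + B2) := by rw [hneg, hl1, hl2]; ring
    _ ≤ 1/(4*t) * (2 * t * (A + B)) :=
        mul_le_mul_of_nonneg_left key (by positivity)
    _ = (A + B)/2 := by field_simp; ring
    _ ≤ ∑ i, huber (y i) := hH
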